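/- Given a strictly convex quadrilateral with non-orthogonal diagonals whose vertices are labeled r1, r2, r3, r4 in clockwise order, the corresponding targets p1, p2, p3, p4 (the vertices of the target square, with pi lying on the guideline ℓi of ri) also appear in clockwise order around the target square, and conversely. -/

import Mathlib

open EuclideanGeometry Real
open scoped RealInnerProductSpace

noncomputable section

abbrev Pt := EuclideanSpace ℝ (Fin 2)

/-- Cross product of two planar vectors. -/
def cross2 (u v : Pt) : ℝ := u 0 * v 1 - u 1 * v 0

/-- Rotation of a planar vector by 90 degrees counterclockwise. -/
def rot90 (v : Pt) : Pt := !₂[-(v 1), v 0]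

/-- The line through `a` with direction vector `d`. -/
def lineDir (a d : Pt) : Set Pt := {p | cross2 (p - a) d = 0}

/-- The line through two points, as a set. -/
def lineThru (a b : Pt) : Set Pt := (affineSpan ℝ {a, b} : Set Pt)

/-- Strictly convex position in the given cyclic order. -/
def Convex4 (a b c d : Pt) : Prop :=
  (0 < cross2 (b-a) (c-b) ∧ 0 < cross2 (c-b) (d-c) ∧ 0 < cross2 (d-c) (a-d) ∧ 0 < cross2 (a-d) (b-a)) ∨
  (cross2 (b-a) (c-b) < 0 ∧ cross2 (c-b) (d-c) < 0 ∧ cross2 (d-c) (a-d) < 0 ∧ cross2 (a-d) (b-a) < 0)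

/-- `a b c d` in clockwise order: every consecutive triple has negative orientation. -/
def Clockwise4 (a b c d : Pt) : Prop :=
  cross2 (b-a) (c-b) < 0 ∧ cross2 (c-b) (d-c) < 0 ∧ cross2 (d-c) (a-d) < 0 ∧ cross2 (a-d) (b-a) < 0

/-- A (nondegenerate) square: four equal sides and four right angles. -/
def IsSquare4 (a b c d : Pt) : Prop :=
  a ≠ b ∧ dist a b = dist b c ∧ dist b c = dist c d ∧ dist c d = dist d a ∧
  inner ℝ (b - a) (d - a) = (0:ℝ) ∧ inner ℝ (a - b) (c - b) = (0:ℝ) ∧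
  inner ℝ (b - c) (d - c) = (0:ℝ) ∧ inner ℝ (c - d) (a - d) = (0:ℝ)

/-- `q` is the auxiliary point of the target-square construction for `r1 r2 r3 r4`:
`dist r1 q = dist r2 r4`, the lines `r1 q` and `r2 r4` are orthogonal, and the ray
from `r1` through `q` intersects the line `r2 r4`. -/
def IsQPoint (r1 r2 r3 r4 q : Pt) : Prop :=
  dist r1 q = dist r2 r4 ∧ inner ℝ (q - r1) (r4 - r2) = (0:ℝ) ∧
  ∃ t : ℝ, 0 ≤ t ∧ r1 + t • (q - r1) ∈ lineDir r2 (r4 - r2)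

set_option maxHeartbeats 1600000 in
/-- The vertices of a strictly convex quadrilateral with non-orthogonal diagonals are in
clockwise order if and only if their targets are in clockwise order. -/
theorem stmt4
    (r1 r2 r3 r4 q a12 a23 a34 a41 : Pt)
    (hconv : Convex4 r1 r2 r3 r4)
    (hdiag : inner ℝ (r3 - r1) (r4 - r2) ≠ (0:ℝ))
    (hq : IsQPoint r1 r2 r3 r4 q) (hq3 : q ≠ r3)
    (ha12 : a12 ∈ lineDir r1 (q - r3) ∩ lineDir r2 (rot90 (q - r3)))
    (ha23 : a23 ∈ lineDir r2 (rot90 (q - r3)) ∩ lineDir r3 (q - r3))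
    (ha34 : a34 ∈ lineDir r3 (q - r3) ∩ lineDir r4 (rot90 (q - r3)))
    (ha41 : a41 ∈ lineDir r4 (rot90 (q - r3)) ∩ lineDir r1 (q - r3))
    (p1 p2 p3 p4 : Pt)
    (hp1 : p1 = midpoint ℝ a41 a12) (hp2 : p2 = midpoint ℝ a12 a23)
    (hp3 : p3 = midpoint ℝ a23 a34) (hp4 : p4 = midpoint ℝ a34 a41)
 :
    Clockwise4 r1 r2 r3 r4 ↔ Clockwise4 p1 p2 p3 p4 := by
  subst hp1 hp2 hp3 hp4
  obtain ⟨hqd, hqo, t, ht, hray⟩ := hq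
  obtain ⟨h12d, h12e⟩ := ha12
  obtain ⟨h23e, h23d⟩ := ha23
  obtain ⟨h34d, h34e⟩ := ha34
  obtain ⟨h41e, h41d⟩ := ha41
  simp only [lineDir, Set.mem_setOf_eq, cross2, rot90, PiLp.sub_apply, PiLp.add_apply,
    PiLp.smul_apply, smul_eq_mul, PiLp.toLp_apply, Matrix.cons_val_zero, Matrix.cons_val_one,
    Matrix.head_cons] at h12d h12e h23e h23d h34d h34e h41e h41d hray
  simp only [PiLp.inner_apply, RCLike.inner_apply, conj_trivial, Fin.sum_univ_two,
    PiLp.sub_apply, Convex4, cross2] at hqo hdiag hconv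
  have hqd2 : (r1 0 - q 0)^2 + (r1 1 - q 1)^2 = (r2 0 - r4 0)^2 + (r2 1 - r4 1)^2 := by
    have h : dist r1 q ^ 2 = dist r2 r4 ^2 := by rw [hqd]
    simp only [EuclideanSpace.dist_eq, Fin.sum_univ_two, Real.dist_eq, sq_abs] at h
    rwa [Real.sq_sqrt (by positivity), Real.sq_sqrt (by positivity)] at h
  have hD : 0 < (q 0 - r3 0)^2 + (q 1 - r3 1)^2 := by
    have hne : q 0 - r3 0 ≠ 0 ∨ q 1 - r3 1 ≠ 0 := by
      by_contra hc
      push_neg at hc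
      apply hq3
      ext i
      fin_cases i
      · simpa using sub_eq_zero.mp hc.1
      · simpa using sub_eq_zero.mp hc.2
    rcases hne with h | h
    · have h2 : 0 < (q 0 - r3 0)^2 := by
        have := pow_pos (abs_pos.mpr h) 2; rwa [sq_abs] at this
      nlinarith [sq_nonneg (q 1 - r3 1)]
    · have h2 : 0 < (q 1 - r3 1)^2 := by
        have := pow_pos (abs_pos.mpr h) 2; rwa [sq_abs] at this
      nlinarith [sq_nonneg (q 0 - r3 0)]
  have e1 : (a23 0 - a41 0) * ((q 0 - r3 0)^2 + (q 1 - r3 1)^2)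
      = ((r2 0 - r4 0)*(q 0 - r3 0) + (r2 1 - r4 1)*(q 1 - r3 1))*(q 0 - r3 0)
      + ((r3 0 - r1 0)*(q 1 - r3 1) - (r3 1 - r1 1)*(q 0 - r3 0))*(q 1 - r3 1) := by
    linear_combination (q 0 - r3 0)*h23e + (q 1 - r3 1)*h23d - (q 0 - r3 0)*h41e - (q 1 - r3 1)*h41d
  have e2 : (a23 1 - a41 1) * ((q 0 - r3 0)^2 + (q 1 - r3 1)^2)
      = ((r2 0 - r4 0)*(q 0 - r3 0) + (r2 1 - r4 1)*(q 1 - r3 1))*(q 1 - r3 1)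
      - ((r3 0 - r1 0)*(q 1 - r3 1) - (r3 1 - r1 1)*(q 0 - r3 0))*(q 0 - r3 0) := by
    linear_combination (q 1 - r3 1)*h23e - (q 0 - r3 0)*h23d - (q 1 - r3 1)*h41e + (q 0 - r3 0)*h41d
  have e3 : (a34 0 - a12 0) * ((q 0 - r3 0)^2 + (q 1 - r3 1)^2)
      = -((r2 0 - r4 0)*(q 0 - r3 0) + (r2 1 - r4 1)*(q 1 - r3 1))*(q 0 - r3 0)
      + ((r3 0 - r1 0)*(q 1 - r3 1) - (r3 1 - r1 1)*(q 0 - r3 0))*(q 1 - r3 1) := by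
    linear_combination (q 0 - r3 0)*h34e + (q 1 - r3 1)*h34d - (q 0 - r3 0)*h12e - (q 1 - r3 1)*h12d
  have e4 : (a34 1 - a12 1) * ((q 0 - r3 0)^2 + (q 1 - r3 1)^2)
      = -((r2 0 - r4 0)*(q 0 - r3 0) + (r2 1 - r4 1)*(q 1 - r3 1))*(q 1 - r3 1)
      - ((r3 0 - r1 0)*(q 1 - r3 1) - (r3 1 - r1 1)*(q 0 - r3 0))*(q 0 - r3 0) := by
    linear_combination (q 1 - r3 1)*h34e - (q 0 - r3 0)*h34d - (q 1 - r3 1)*h12e + (q 0 - r3 0)*h12d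
  have eK : ((a23 0 - a41 0)*(a34 1 - a12 1) - (a23 1 - a41 1)*(a34 0 - a12 0))
        * ((q 0 - r3 0)^2 + (q 1 - r3 1)^2)^2
      = -2*((r2 0 - r4 0)*(q 0 - r3 0) + (r2 1 - r4 1)*(q 1 - r3 1))
          *((r3 0 - r1 0)*(q 1 - r3 1) - (r3 1 - r1 1)*(q 0 - r3 0))
          *((q 0 - r3 0)^2 + (q 1 - r3 1)^2) := by
    linear_combination ((a34 1 - a12 1) * ((q 0 - r3 0)^2 + (q 1 - r3 1)^2)) * e1
      + (((r2 0 - r4 0)*(q 0 - r3 0) + (r2 1 - r4 1)*(q 1 - r3 1))*(q 0 - r3 0)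
        + ((r3 0 - r1 0)*(q 1 - r3 1) - (r3 1 - r1 1)*(q 0 - r3 0))*(q 1 - r3 1)) * e4
      - ((a34 0 - a12 0) * ((q 0 - r3 0)^2 + (q 1 - r3 1)^2)) * e2
      - (((r2 0 - r4 0)*(q 0 - r3 0) + (r2 1 - r4 1)*(q 1 - r3 1))*(q 1 - r3 1)
        - ((r3 0 - r1 0)*(q 1 - r3 1) - (r3 1 - r1 1)*(q 0 - r3 0))*(q 0 - r3 0)) * e3
  have hKD : ((a23 0 - a41 0)*(a34 1 - a12 1) - (a23 1 - a41 1)*(a34 0 - a12 0))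
        * ((q 0 - r3 0)^2 + (q 1 - r3 1)^2)
      = -2*(((r2 0 - r4 0)*(q 0 - r3 0) + (r2 1 - r4 1)*(q 1 - r3 1))
          *((r3 0 - r1 0)*(q 1 - r3 1) - (r3 1 - r1 1)*(q 0 - r3 0))) :=
    mul_right_cancel₀ (ne_of_gt hD) (by linear_combination eK)
  have key : ((q 0 - r1 0 + (r4 1 - r2 1))^2 + (q 1 - r1 1 - (r4 0 - r2 0))^2)
      * ((q 0 - r1 0 - (r4 1 - r2 1))^2 + (q 1 - r1 1 + (r4 0 - r2 0))^2) = 0 := by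
    linear_combination 4*((q 0 - r1 0)*(r4 0 - r2 0) + (q 1 - r1 1)*(r4 1 - r2 1))*hqo
      + ((r1 0 - q 0)^2 + (r1 1 - q 1)^2 - (r2 0 - r4 0)^2 - (r2 1 - r4 1)^2)*hqd2
  have mp : ∀ (a b : Pt) (i : Fin 2), midpoint ℝ a b i = (a i + b i)/2 := by
    intro a b i; simp [midpoint_eq_smul_add]; ring
  rcases mul_eq_zero.mp key with hcase | hcase
  · -- q - r1 = rot90 (r4 - r2)
    have hx : q 0 - r1 0 + (r4 1 - r2 1) = 0 := by
      have h1 : (q 0 - r1 0 + (r4 1 - r2 1))^2 = 0 := by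
        linarith [hcase, sq_nonneg (q 0 - r1 0 + (r4 1 - r2 1)),
          sq_nonneg (q 1 - r1 1 - (r4 0 - r2 0))]
      exact sq_eq_zero_iff.mp h1
    have hy : q 1 - r1 1 - (r4 0 - r2 0) = 0 := by
      have h1 : (q 1 - r1 1 - (r4 0 - r2 0))^2 = 0 := by
        linarith [hcase, sq_nonneg (q 0 - r1 0 + (r4 1 - r2 1)),
          sq_nonneg (q 1 - r1 1 - (r4 0 - r2 0))]
      exact sq_eq_zero_iff.mp h1
    have hKD3 : ((a23 0 - a41 0)*(a34 1 - a12 1) - (a23 1 - a41 1)*(a34 0 - a12 0))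
          * ((q 0 - r3 0)^2 + (q 1 - r3 1)^2)
        = -2*(((r3 0 - r1 0)*(r4 0 - r2 0) + (r3 1 - r1 1)*(r4 1 - r2 1))
            *((r3 0 - r1 0)*(r4 0 - r2 0) + (r3 1 - r1 1)*(r4 1 - r2 1))) := by
      linear_combination hKD
        + (-2*((r3 0 - r1 0)*(q 1 - r3 1) - (r3 1 - r1 1)*(q 0 - r3 0))*(r2 0 - r4 0)
           + 2*((r3 0 - r1 0)*(r4 0 - r2 0) + (r3 1 - r1 1)*(r4 1 - r2 1))*(r3 1 - r1 1))*hx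
        + (-2*((r3 0 - r1 0)*(q 1 - r3 1) - (r3 1 - r1 1)*(q 0 - r3 0))*(r2 1 - r4 1)
           - 2*((r3 0 - r1 0)*(r4 0 - r2 0) + (r3 1 - r1 1)*(r4 1 - r2 1))*(r3 0 - r1 0))*hy
    have hK : ((a23 0 - a41 0)*(a34 1 - a12 1) - (a23 1 - a41 1)*(a34 0 - a12 0)) < 0 := by
      by_contra hcon
      push_neg at hcon
      have h1 := mul_nonneg hcon hD.le
      linarith [mul_self_pos.mpr hdiag, hKD3]
    have hc4 : (r1 0 - r4 0) * (r2 1 - r1 1) - (r1 1 - r4 1) * (r2 0 - r1 0) ≤ 0 := by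
      have he : (r1 0 - r4 0) * (r2 1 - r1 1) - (r1 1 - r4 1) * (r2 0 - r1 0)
          = -(t * ((r4 0 - r2 0)^2 + (r4 1 - r2 1)^2)) := by
        linear_combination -hray + t*(r4 1 - r2 1)*hx - t*(r4 0 - r2 0)*hy
      linarith [he, mul_nonneg ht (show (0:ℝ) ≤ (r4 0 - r2 0)^2 + (r4 1 - r2 1)^2 by positivity)]
    refine iff_of_true ?_ ?_
    · rcases hconv with hpos | hneg
      · exact absurd hpos.2.2.2 (by linarith)
      · simp only [Clockwise4, cross2, PiLp.sub_apply]
        exact hneg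
    · simp only [Clockwise4, cross2, PiLp.sub_apply, mp]
      refine ⟨by linarith [hK], by linarith [hK], by linarith [hK], by linarith [hK]⟩
  · -- q - r1 = - rot90 (r4 - r2)
    have hx : q 0 - r1 0 - (r4 1 - r2 1) = 0 := by
      have h1 : (q 0 - r1 0 - (r4 1 - r2 1))^2 = 0 := by
        linarith [hcase, sq_nonneg (q 0 - r1 0 - (r4 1 - r2 1)),
          sq_nonneg (q 1 - r1 1 + (r4 0 - r2 0))]
      exact sq_eq_zero_iff.mp h1
    have hy : q 1 - r1 1 + (r4 0 - r2 0) = 0 := by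
      have h1 : (q 1 - r1 1 + (r4 0 - r2 0))^2 = 0 := by
        linarith [hcase, sq_nonneg (q 0 - r1 0 - (r4 1 - r2 1)),
          sq_nonneg (q 1 - r1 1 + (r4 0 - r2 0))]
      exact sq_eq_zero_iff.mp h1
    have hKD3 : ((a23 0 - a41 0)*(a34 1 - a12 1) - (a23 1 - a41 1)*(a34 0 - a12 0))
          * ((q 0 - r3 0)^2 + (q 1 - r3 1)^2)
        = 2*(((r3 0 - r1 0)*(r4 0 - r2 0) + (r3 1 - r1 1)*(r4 1 - r2 1))
            *((r3 0 - r1 0)*(r4 0 - r2 0) + (r3 1 - r1 1)*(r4 1 - r2 1))) := by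
      linear_combination hKD
        + (-2*((r3 0 - r1 0)*(q 1 - r3 1) - (r3 1 - r1 1)*(q 0 - r3 0))*(r2 0 - r4 0)
           + 2*((r3 0 - r1 0)*(r4 0 - r2 0) + (r3 1 - r1 1)*(r4 1 - r2 1))*(r3 1 - r1 1))*hx
        + (-2*((r3 0 - r1 0)*(q 1 - r3 1) - (r3 1 - r1 1)*(q 0 - r3 0))*(r2 1 - r4 1)
           - 2*((r3 0 - r1 0)*(r4 0 - r2 0) + (r3 1 - r1 1)*(r4 1 - r2 1))*(r3 0 - r1 0))*hy
    have hK : 0 < ((a23 0 - a41 0)*(a34 1 - a12 1) - (a23 1 - a41 1)*(a34 0 - a12 0)) := by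
      by_contra hcon
      push_neg at hcon
      have h1 := mul_nonneg (neg_nonneg.mpr hcon) hD.le
      linarith [mul_self_pos.mpr hdiag, hKD3]
    have hc4 : 0 ≤ (r1 0 - r4 0) * (r2 1 - r1 1) - (r1 1 - r4 1) * (r2 0 - r1 0) := by
      have he : (r1 0 - r4 0) * (r2 1 - r1 1) - (r1 1 - r4 1) * (r2 0 - r1 0)
          = t * ((r4 0 - r2 0)^2 + (r4 1 - r2 1)^2) := by
        linear_combination -hray + t*(r4 1 - r2 1)*hx - t*(r4 0 - r2 0)*hy
      linarith [he, mul_nonneg ht (show (0:ℝ) ≤ (r4 0 - r2 0)^2 + (r4 1 - r2 1)^2 by positivity)]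
    refine iff_of_false ?_ ?_
    · intro hcw
      simp only [Clockwise4, cross2, PiLp.sub_apply] at hcw
      linarith [hcw.2.2.2]
    · intro hcw
      simp only [Clockwise4, cross2, PiLp.sub_apply, mp] at hcw
      linarith [hcw.1, hK]

end
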